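/- The Cayley graph of a Coxeter group is edge-reflecting (Theorem coxeter), vertex form. Let B be a type, M a Coxeter matrix on B, W a group, and cs : CoxeterSystem M W with simple reflections sᵢ = cs.simple i and length function ℓ = cs.length. For a reflection t of cs (cs.IsReflection t, i.e. t = w * sᵢ * w⁻¹ for some w and i) define S_t := {w : W | ℓ w < ℓ (t * w)}. Then: (i) for every w : W, ℓ (t * w) ≠ ℓ w; hence left multiplication by t is an involution of W interchanging S_t and its complement, and it commutes with the right multiplications w ↦ w * sᵢ defining the edges of the Cayley graph; (ii) for every w ∈ S_t and every i : B with w * sᵢ ∉ S_t, one has w * sᵢ = t * w; (iii) for any two distinct u, v : W there exists a reflection t of cs such that exactly one of u, v lies in S_t. -/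

import Mathlib

open List

namespace CoxCayleyAux

open scoped Classical

variable {B W : Type*} [Group W] {M : CoxeterMatrix B} (cs : CoxeterSystem M W)

/-- The basic involution on `W × ZMod 2` attached to a simple reflection. -/
noncomputable def etaFun (i : B) : W × ZMod 2 → W × ZMod 2 :=
  fun x => (cs.simple i * x.1 * cs.simple i, x.2 + if x.1 = cs.simple i then 1 else 0)

lemma conj_simple_eq_simple_iff (i : B) (t : W) :
    cs.simple i * t * cs.simple i = cs.simple i ↔ t = cs.simple i := by
  constructor
  · intro h
    have := congrArg (fun x => cs.simple i * x * cs.simple i) h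
    simpa [mul_assoc, cs.simple_mul_simple_cancel_left, cs.simple_mul_simple_self] using this
  · rintro rfl
    simp [mul_assoc, cs.simple_mul_simple_cancel_left]

lemma etaFun_involutive (i : B) : Function.Involutive (etaFun cs i) := by
  rintro ⟨t, e⟩
  unfold etaFun
  simp only
  have h1 : cs.simple i * (cs.simple i * t * cs.simple i) * cs.simple i = t := by
    simp [mul_assoc, cs.simple_mul_simple_cancel_left, cs.simple_mul_simple_self]
  rw [h1]
  have h2 : (cs.simple i * t * cs.simple i = cs.simple i) ↔ (t = cs.simple i) :=
    conj_simple_eq_simple_iff cs i t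
  by_cases h : t = cs.simple i
  · simp only [h2, if_pos h]
    have : (1 : ZMod 2) + 1 = 0 := by decide
    rw [Prod.mk.injEq]
    exact ⟨rfl, by rw [add_assoc, this, add_zero]⟩
  · simp [h2, h]

/-- The permutation version. -/
noncomputable def eta (i : B) : Equiv.Perm (W × ZMod 2) :=
  (etaFun_involutive cs i).toPerm _

lemma eta_apply (i : B) (x : W × ZMod 2) :
    eta cs i x = (cs.simple i * x.1 * cs.simple i, x.2 + if x.1 = cs.simple i then 1 else 0) :=
  rfl

lemma conj_eq_iff (g x y : W) : g * x * g⁻¹ = y ↔ x = g⁻¹ * y * g := by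
  constructor <;> rintro rfl <;> group

lemma b_conj_pow (i j : B) (n : ℕ) :
    cs.simple j * (cs.simple i * cs.simple j) ^ n * cs.simple j
      = ((cs.simple i * cs.simple j)⁻¹) ^ n := by
  have h1 : cs.simple j * (cs.simple i * cs.simple j) * (cs.simple j)⁻¹
      = (cs.simple i * cs.simple j)⁻¹ := by
    rw [cs.inv_simple, mul_inv_rev, cs.inv_simple, cs.inv_simple]
    simp [mul_assoc, cs.simple_mul_simple_self]
  calc cs.simple j * (cs.simple i * cs.simple j) ^ n * cs.simple j
      = cs.simple j * (cs.simple i * cs.simple j) ^ n * (cs.simple j)⁻¹ := by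
        rw [cs.inv_simple]
    _ = (cs.simple j * (cs.simple i * cs.simple j) * (cs.simple j)⁻¹) ^ n := by
        rw [conj_pow]
    _ = ((cs.simple i * cs.simple j)⁻¹) ^ n := by rw [h1]

lemma key1 (i j : B) (n : ℕ) :
    ((cs.simple i * cs.simple j) ^ n)⁻¹ * cs.simple j * (cs.simple i * cs.simple j) ^ n
      = ((cs.simple i * cs.simple j) ^ (2 * n))⁻¹ * cs.simple j := by
  set c := cs.simple i * cs.simple j with hc
  have hb : cs.simple j * c ^ n = (c⁻¹) ^ n * cs.simple j := by
    have := b_conj_pow cs i j n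
    have h2 : cs.simple j * c ^ n * cs.simple j * cs.simple j = (c⁻¹)^n * cs.simple j := by
      rw [this]
    rwa [mul_assoc, cs.simple_mul_simple_self, mul_one] at h2
  rw [mul_assoc, hb, ← mul_assoc, inv_pow, ← mul_inv_rev, ← pow_add, two_mul]

lemma key2 (i j : B) (n : ℕ) :
    ((cs.simple i * cs.simple j) ^ n)⁻¹ * ((cs.simple i * cs.simple j)⁻¹ * cs.simple j)
        * (cs.simple i * cs.simple j) ^ n
      = ((cs.simple i * cs.simple j) ^ (2 * n + 1))⁻¹ * cs.simple j := by
  set c := cs.simple i * cs.simple j with hc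
  have hb : cs.simple j * c ^ n = (c⁻¹) ^ n * cs.simple j := by
    have := b_conj_pow cs i j n
    have h2 : cs.simple j * c ^ n * cs.simple j * cs.simple j = (c⁻¹)^n * cs.simple j := by
      rw [this]
    rwa [mul_assoc, cs.simple_mul_simple_self, mul_one] at h2
  calc (c ^ n)⁻¹ * (c⁻¹ * cs.simple j) * c ^ n
      = (c ^ n)⁻¹ * c⁻¹ * (cs.simple j * c ^ n) := by group
    _ = (c ^ n)⁻¹ * c⁻¹ * ((c⁻¹) ^ n * cs.simple j) := by rw [hb]
    _ = ((c ^ n)⁻¹ * c⁻¹ * (c ^ n)⁻¹) * cs.simple j := by rw [inv_pow]; group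
    _ = (c ^ (2 * n + 1))⁻¹ * cs.simple j := by
        rw [two_mul, pow_add, pow_succ]
        group

lemma eta_mul_apply (i j : B) (y : W × ZMod 2) :
    (eta cs i * eta cs j) y
      = ((cs.simple i * cs.simple j) * y.1 * ((cs.simple i * cs.simple j))⁻¹,
         y.2 + ((if y.1 = cs.simple j then 1 else 0)
           + if y.1 = (cs.simple i * cs.simple j)⁻¹ * cs.simple j then 1 else 0)) := by
  obtain ⟨t, e⟩ := y
  rw [Equiv.Perm.mul_apply, eta_apply, eta_apply]
  simp only
  have hfst : cs.simple i * (cs.simple j * t * cs.simple j) * cs.simple i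
      = (cs.simple i * cs.simple j) * t * (cs.simple i * cs.simple j)⁻¹ := by
    rw [mul_inv_rev, cs.inv_simple, cs.inv_simple]; group
  have hcond : (cs.simple j * t * cs.simple j = cs.simple i)
      ↔ (t = (cs.simple i * cs.simple j)⁻¹ * cs.simple j) := by
    rw [show cs.simple j * t * cs.simple j = cs.simple j * t * (cs.simple j)⁻¹ by
      rw [cs.inv_simple]]
    rw [conj_eq_iff]
    constructor <;> intro h
    · rw [h, mul_inv_rev, cs.inv_simple, cs.inv_simple]
    · rw [h, mul_inv_rev, cs.inv_simple, cs.inv_simple]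
  rw [hfst, hcond, Prod.mk.injEq]
  exact ⟨rfl, by rw [add_assoc]⟩

lemma eta_mul_pow_apply (i j : B) (n : ℕ) (t : W) (e : ZMod 2) :
    ((eta cs i * eta cs j) ^ n) (t, e)
      = ((cs.simple i * cs.simple j) ^ n * t * ((cs.simple i * cs.simple j) ^ n)⁻¹,
         e + ∑ k ∈ Finset.range (2 * n),
           if t = ((cs.simple i * cs.simple j) ^ k)⁻¹ * cs.simple j then 1 else 0) := by
  set c := cs.simple i * cs.simple j with hc
  induction n with
  | zero => simp
  | succ n ih =>
      rw [pow_succ', Equiv.Perm.mul_apply, ih, eta_mul_apply]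
      simp only
      have hfst : c * (c ^ n * t * (c ^ n)⁻¹) * c⁻¹ = c ^ (n + 1) * t * (c ^ (n + 1))⁻¹ := by
        rw [pow_succ']; group
      have hcA : (c ^ n * t * (c ^ n)⁻¹ = cs.simple j) ↔ (t = (c ^ (2 * n))⁻¹ * cs.simple j) := by
        rw [conj_eq_iff, key1 cs i j n]
      have hcB : (c ^ n * t * (c ^ n)⁻¹ = c⁻¹ * cs.simple j)
          ↔ (t = (c ^ (2 * n + 1))⁻¹ * cs.simple j) := by
        rw [conj_eq_iff, key2 cs i j n]
      rw [hfst, Prod.mk.injEq]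
      refine ⟨rfl, ?_⟩
      rw [hcA, hcB]
      have hrange : 2 * (n + 1) = (2 * n) + 1 + 1 := by ring
      rw [hrange, Finset.sum_range_succ, Finset.sum_range_succ]
      ring
  
lemma zmod2_cases (x : ZMod 2) : x = 0 ∨ x = 1 := by revert x; decide

lemma eta_liftable : M.IsLiftable (fun i => eta cs i) := by
  intro i j
  apply Equiv.ext
  rintro ⟨t, e⟩
  rw [eta_mul_pow_apply]
  set c := cs.simple i * cs.simple j with hc
  have hcM : c ^ M i j = 1 := cs.simple_mul_simple_pow i j
  have hper : ∀ k : ℕ, c ^ (k + M i j) = c ^ k := by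
    intro k; rw [pow_add, hcM, mul_one]
  have hsum : ∑ k ∈ Finset.range (2 * M i j),
      (if t = (c ^ k)⁻¹ * cs.simple j then (1 : ZMod 2) else 0) = 0 := by
    have h2 : 2 * M i j = M i j + M i j := by ring
    rw [h2, Finset.sum_range_add]
    have : ∀ k ∈ Finset.range (M i j),
        (if t = (c ^ (M i j + k))⁻¹ * cs.simple j then (1 : ZMod 2) else 0)
          = (if t = (c ^ k)⁻¹ * cs.simple j then (1 : ZMod 2) else 0) := by
      intro k _
      rw [show M i j + k = k + M i j by ring, hper k]
    rw [Finset.sum_congr rfl this]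
    have hx : ∀ x : ZMod 2, x + x = 0 := by decide
    exact hx _
  rw [hcM, hsum, add_zero]
  simp

/-- The parity homomorphism. -/
noncomputable def rho : W →* Equiv.Perm (W × ZMod 2) :=
  CoxeterSystem.lift cs ⟨fun i => eta cs i, eta_liftable cs⟩

lemma rho_simple (i : B) : rho cs (cs.simple i) = eta cs i :=
  cs.lift_apply_simple (eta_liftable cs) i

/-- The parity of the number of times a reflection `t` appears in the right
inversion sequence of (any word for) `w`. -/
noncomputable def gfun (w t : W) : ZMod 2 := ((rho cs w) (t, 0)).2

lemma rho_apply (w t : W) (e : ZMod 2) :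
    rho cs w (t, e) = (w * t * w⁻¹, gfun cs w t + e) := by
  induction w using cs.simple_induction_left generalizing t e with
  | one => simp [gfun]
  | mul_simple_left w i ih =>
      have hmul : rho cs (cs.simple i * w) = rho cs (cs.simple i) * rho cs w := map_mul _ _ _
      have happ : ∀ (t : W) (e : ZMod 2), rho cs (cs.simple i * w) (t, e)
          = eta cs i (rho cs w (t, e)) := by
        intro t e; rw [hmul, Equiv.Perm.mul_apply, rho_simple]
      have hg : gfun cs (cs.simple i * w) t
          = gfun cs w t + (if w * t * w⁻¹ = cs.simple i then 1 else 0) := by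
        unfold gfun
        rw [happ, ih]
        simp [eta_apply]
      rw [happ, ih, eta_apply, hg]
      simp only [Prod.mk.injEq]
      constructor
      · rw [mul_inv_rev, cs.inv_simple]; group
      · ring

lemma gfun_mul (u v t : W) :
    gfun cs (u * v) t = gfun cs v t + gfun cs u (v * t * v⁻¹) := by
  have : rho cs (u * v) (t, 0) = rho cs u (rho cs v (t, 0)) := by
    rw [map_mul, Equiv.Perm.mul_apply]
  unfold gfun
  rw [this, rho_apply, rho_apply, rho_apply]
  simp only
  ring

lemma gfun_one (t : W) : gfun cs 1 t = 0 := by simp [gfun]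

lemma gfun_simple (i : B) (t : W) :
    gfun cs (cs.simple i) t = if t = cs.simple i then 1 else 0 := by
  unfold gfun
  rw [rho_simple, eta_apply]
  simp

lemma gfun_inv (w t : W) : gfun cs w⁻¹ (w * t * w⁻¹) = gfun cs w t := by
  have h := gfun_mul cs w⁻¹ w t
  rw [inv_mul_cancel, gfun_one] at h
  have hx : ∀ x y : ZMod 2, 0 = x + y → y = x := by decide
  exact hx _ _ h

lemma ris_cons (i : B) (ω : List B) :
    cs.rightInvSeq (i :: ω) =
      ((cs.wordProd ω)⁻¹ * cs.simple i * cs.wordProd ω) :: cs.rightInvSeq ω := rfl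

lemma gfun_eq_zero_of_not_mem (ω : List B) (t : W) (h : t ∉ cs.rightInvSeq ω) :
    gfun cs (cs.wordProd ω) t = 0 := by
  induction ω generalizing t with
  | nil => simpa using gfun_one cs t
  | cons i ω ih =>
      rw [ris_cons, List.mem_cons] at h
      push_neg at h
      rw [cs.wordProd_cons, gfun_mul, gfun_simple]
      have hcond : ¬ (cs.wordProd ω * t * (cs.wordProd ω)⁻¹ = cs.simple i) := by
        intro hc
        apply h.1
        rw [conj_eq_iff] at hc
        exact hc
      rw [if_neg hcond, ih t h.2, add_zero]

lemma gfun_eq_one_of_mem {ω : List B} (hred : cs.IsReduced ω) {t : W}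
    (h : t ∈ cs.rightInvSeq ω) : gfun cs (cs.wordProd ω) t = 1 := by
  induction ω generalizing t with
  | nil => simp at h
  | cons i ω ih =>
      have hredω : cs.IsReduced ω := by
        have := CoxeterSystem.IsReduced.drop (ω := i :: ω) hred (j := 1)
        simpa using this
      have hnd := hred.nodup_rightInvSeq
      rw [ris_cons] at hnd h
      rw [List.mem_cons] at h
      rw [cs.wordProd_cons, gfun_mul, gfun_simple]
      rcases h with h | h
      · have hnm : t ∉ cs.rightInvSeq ω := by
          rw [h]; exact (List.nodup_cons.mp hnd).1
        rw [gfun_eq_zero_of_not_mem cs ω t hnm]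
        have hcond : cs.wordProd ω * t * (cs.wordProd ω)⁻¹ = cs.simple i := by
          rw [conj_eq_iff]; exact h
        rw [if_pos hcond, zero_add]
      · have htne : t ≠ (cs.wordProd ω)⁻¹ * cs.simple i * cs.wordProd ω := by
          intro hc
          rw [List.nodup_cons] at hnd
          exact hnd.1 (hc ▸ h)
        have hcond : ¬ (cs.wordProd ω * t * (cs.wordProd ω)⁻¹ = cs.simple i) := by
          intro hc; exact htne ((conj_eq_iff _ _ _).mp hc)
        rw [if_neg hcond, ih hredω h, add_zero]

lemma gfun_refl {t : W} (ht : cs.IsReflection t) : gfun cs t t = 1 := by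
  obtain ⟨w, i, rfl⟩ := ht
  have h1 : gfun cs w⁻¹ (w * cs.simple i * w⁻¹) = gfun cs w (cs.simple i) :=
    gfun_inv cs w (cs.simple i)
  have harg : (cs.simple i * w⁻¹) * (w * cs.simple i * w⁻¹) * (cs.simple i * w⁻¹)⁻¹
      = cs.simple i := by
    rw [mul_inv_rev, inv_inv, cs.inv_simple]
    simp [mul_assoc, cs.simple_mul_simple_cancel_left]
  have harg2 : w⁻¹ * (w * cs.simple i * w⁻¹) * (w⁻¹)⁻¹ = cs.simple i := by
    simp [mul_assoc]
  calc gfun cs (w * cs.simple i * w⁻¹) (w * cs.simple i * w⁻¹)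
      = gfun cs (w * (cs.simple i * w⁻¹)) (w * cs.simple i * w⁻¹) := by rw [mul_assoc]
    _ = gfun cs (cs.simple i * w⁻¹) (w * cs.simple i * w⁻¹)
        + gfun cs w (cs.simple i) := by rw [gfun_mul, harg]
    _ = (gfun cs w⁻¹ (w * cs.simple i * w⁻¹)
        + gfun cs (cs.simple i) (cs.simple i)) + gfun cs w (cs.simple i) := by
          rw [gfun_mul, harg2]
    _ = 1 := by
          rw [h1, gfun_simple, if_pos rfl]
          have : ∀ x : ZMod 2, x + 1 + x = 1 := by decide
          exact this _

lemma right_lt_iff {t : W} (ht : cs.IsReflection t) (w : W) :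
    cs.length (w * t) < cs.length w ↔ gfun cs w t = 1 := by
  constructor
  · intro hlt
    have hv : gfun cs (w * t) t = 0 := by
      rcases zmod2_cases (gfun cs (w * t) t) with h | h
      · exact h
      · exfalso
        obtain ⟨ω, hred, hω⟩ := cs.exists_reduced_word' (w * t)
        rw [hω] at h
        have hmem : t ∈ cs.rightInvSeq ω := by
          by_contra hnm
          rw [gfun_eq_zero_of_not_mem cs ω t hnm] at h
          exact absurd h (by decide)
        have := (cs.isRightInversion_of_mem_rightInvSeq hred hmem).2
        rw [← hω, mul_assoc, ht.mul_self, mul_one] at this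
        exact absurd hlt (not_lt.mpr this.le)
    have hw : w = (w * t) * t := by rw [mul_assoc, ht.mul_self, mul_one]
    rw [hw, gfun_mul, gfun_refl cs ht]
    have harg : t * t * t⁻¹ = t := by rw [mul_inv_cancel_right]
    rw [harg, hv, add_zero]
  · intro hg
    obtain ⟨ω, hred, hω⟩ := cs.exists_reduced_word' w
    rw [hω] at hg ⊢
    have hmem : t ∈ cs.rightInvSeq ω := by
      by_contra hnm
      rw [gfun_eq_zero_of_not_mem cs ω t hnm] at hg
      exact absurd hg (by decide)
    exact (cs.isRightInversion_of_mem_rightInvSeq hred hmem).2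

lemma left_lt_iff {t : W} (ht : cs.IsReflection t) (w : W) :
    cs.length w < cs.length (t * w) ↔ gfun cs w⁻¹ t = 0 := by
  have hne : cs.length (t * w) ≠ cs.length w := ht.length_mul_right_ne w
  have hinv : cs.length (t * w) = cs.length (w⁻¹ * t) := by
    rw [← cs.length_inv (w⁻¹ * t), mul_inv_rev, inv_inv, ht.inv]
  have hinv2 : cs.length w = cs.length w⁻¹ := (cs.length_inv w).symm
  rw [hinv, hinv2]
  constructor
  · intro hlt
    rcases zmod2_cases (gfun cs w⁻¹ t) with h | h
    · exact h
    · exfalso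
      have := (right_lt_iff cs ht w⁻¹).mpr h
      omega
  · intro hg
    have hne' : cs.length (w⁻¹ * t) ≠ cs.length w⁻¹ := by
      rw [← hinv, ← hinv2]; exact hne
    have : ¬ cs.length (w⁻¹ * t) < cs.length w⁻¹ := by
      intro hc
      rw [(right_lt_iff cs ht w⁻¹).mp hc] at hg
      exact absurd hg (by decide)
    omega

lemma left_lt_iff_one {t : W} (ht : cs.IsReflection t) (w : W) :
    cs.length (t * w) < cs.length w ↔ gfun cs w⁻¹ t = 1 := by
  have hne : cs.length (t * w) ≠ cs.length w := ht.length_mul_right_ne w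
  have h0 := left_lt_iff cs ht w
  constructor
  · intro hlt
    rcases zmod2_cases (gfun cs w⁻¹ t) with h | h
    · exfalso
      have := h0.mpr h
      omega
    · exact h
  · intro hg
    have h1 : gfun cs w⁻¹ t ≠ 0 := by rw [hg]; decide
    have h2 : ¬ cs.length w < cs.length (t * w) := fun hc => h1 (h0.mp hc)
    omega

end CoxCayleyAux

open CoxCayleyAux

/-- **The Cayley graph of a Coxeter group is edge-reflecting (vertex form)**
(Theorem coxeter). For a reflection `t` of a Coxeter system `cs`, let
`S_t = {w | ℓ w < ℓ (t * w)}`. Then: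
(i) `ℓ (t * w) ≠ ℓ w` for all `w` (so left multiplication by `t` is an
involution interchanging `S_t` and its complement, commuting with the right
multiplications defining the Cayley graph edges);
(ii) if `w ∈ S_t` and `w * sᵢ ∉ S_t` then `w * sᵢ = t * w`;
(iii) any two distinct group elements are separated by some `S_t`. -/
theorem coxeter_cayley_edge_reflecting {B W : Type*} [Group W]
    (M : CoxeterMatrix B) (cs : CoxeterSystem M W) :
    (∀ t : W, cs.IsReflection t → ∀ w : W, cs.length (t * w) ≠ cs.length w) ∧
    (∀ t : W, cs.IsReflection t → ∀ (w : W) (i : B),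
      cs.length w < cs.length (t * w) →
      ¬ (cs.length (w * cs.simple i) < cs.length (t * (w * cs.simple i))) →
      w * cs.simple i = t * w) ∧
    (∀ u v : W, u ≠ v → ∃ t : W, cs.IsReflection t ∧
      Xor' (cs.length u < cs.length (t * u))
           (cs.length v < cs.length (t * v))) := by
  refine ⟨fun t ht w => ht.length_mul_right_ne w, ?_, ?_⟩
  · intro t ht w i h1 h2
    have hg1 : gfun cs w⁻¹ t = 0 := (left_lt_iff cs ht w).mp h1
    have hg2 : gfun cs (w * cs.simple i)⁻¹ t = 1 := by
      have hne := ht.length_mul_right_ne (w * cs.simple i)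
      have hlt : cs.length (t * (w * cs.simple i)) < cs.length (w * cs.simple i) := by
        omega
      exact (left_lt_iff_one cs ht (w * cs.simple i)).mp hlt
    rw [mul_inv_rev, cs.inv_simple, gfun_mul, hg1, gfun_simple, inv_inv, zero_add] at hg2
    have hcond : w⁻¹ * t * w = cs.simple i := by
      by_contra hc
      rw [if_neg hc] at hg2
      exact absurd hg2 (by decide)
    calc w * cs.simple i = w * (w⁻¹ * t * w) := by rw [hcond]
      _ = t * w := by group
  · intro u v huv
    have hx : u⁻¹ * v ≠ 1 := by
      intro hc
      apply huv
      have := congrArg (fun y => u * y) hc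
      simpa [mul_assoc] using this.symm
    obtain ⟨ω, hred, hω⟩ := cs.exists_reduced_word' (u⁻¹ * v)⁻¹
    have hωne : ω ≠ [] := by
      intro hc
      rw [hc] at hω
      simp at hω
      apply hx
      have := congrArg (fun y => y⁻¹) hω
      simpa [mul_inv_rev] using this
    have hrisne : cs.rightInvSeq ω ≠ [] := by
      intro hc
      have := cs.length_rightInvSeq ω
      rw [hc] at this
      simp at this
      exact hωne (List.length_eq_zero_iff.mp this.symm)
    obtain ⟨t', ht'mem⟩ := List.exists_mem_of_ne_nil _ hrisne
    have ht'refl : cs.IsReflection t' := cs.isReflection_of_mem_rightInvSeq ω ht'mem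
    have hgx : gfun cs (u⁻¹ * v)⁻¹ t' = 1 := by
      rw [hω]; exact gfun_eq_one_of_mem cs hred ht'mem
    refine ⟨u * t' * u⁻¹, ht'refl.conj u, ?_⟩
    have hkey : gfun cs v⁻¹ (u * t' * u⁻¹) = gfun cs u⁻¹ (u * t' * u⁻¹) + 1 := by
      have hv : v⁻¹ = (u⁻¹ * v)⁻¹ * u⁻¹ := by group
      rw [hv, gfun_mul]
      have harg : u⁻¹ * (u * t' * u⁻¹) * (u⁻¹)⁻¹ = t' := by group
      rw [harg, hgx]
    have hu := left_lt_iff cs (ht'refl.conj u) u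
    have hv := left_lt_iff cs (ht'refl.conj u) v
    rcases zmod2_cases (gfun cs u⁻¹ (u * t' * u⁻¹)) with h | h
    · left
      constructor
      · exact hu.mpr h
      · intro hc
        have := hv.mp hc
        rw [hkey, h] at this
        exact absurd this (by decide)
    · right
      constructor
      · apply hv.mpr
        rw [hkey, h]
        decide
      · intro hc
        rw [hu.mp hc] at h
        exact absurd h (by decide)
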